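/- Let k ≥ 2, d ≥ 1, ε ∈ (0,1), and let N ≤ R be positive integers. Let s : [N] → [R] and let G_s be the digraph on the N + R vertices {u₁, …, u_N} ∪ {v₁, …, v_R} whose edge set is exactly {(u_i, v_{s(i)}) : i ∈ [N]} (so every out-degree of G_s is at most 1 ≤ d). If every k-collision-free t : [N] → [R] differs from s in at least εN positions, then every k-star-free digraph on the same vertex set as G_s has edge set differing from that of G_s in at least εN edges; in particular, G_s is (εN/(d(N+R)))-far from k-star-freeness with respect to out-degree bound d. -/

import Mathlib

open Finset

/-- The `k`-star: `k` source vertices, each with a single outgoing edge to a common center. -/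
def starEdges (k : ℕ) : Finset (Fin (k + 1) × Fin (k + 1)) :=
  Finset.univ.image (fun j : Fin k => (j.succ, (0 : Fin (k + 1))))

/-- The digraph with edge set `E₂` contains a subgraph isomorphic to the one with edge set `E₁`. -/
def ContainsCopy {V W : Type*} (E₁ : Finset (V × V)) (E₂ : Finset (W × W)) : Prop :=
  ∃ f : V → W, Function.Injective f ∧ ∀ a b : V, (a, b) ∈ E₁ → (f a, f b) ∈ E₂

/-- The digraph `G_s` on `N + R` vertices associated with a sequence `s : [N] → [R]`. -/
def gsEdges {N R : ℕ} (s : Fin N → Fin R) :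
    Finset ((Fin N ⊕ Fin R) × (Fin N ⊕ Fin R)) :=
  Finset.univ.image (fun i : Fin N => (Sum.inl i, Sum.inr (s i)))

theorem stmt3 (k d N R : ℕ) (hk : 2 ≤ k) (hd : 1 ≤ d) (hN : 0 < N) (hNR : N ≤ R)
    (ε : ℝ) (hε0 : 0 < ε) (hε1 : ε < 1)
    (s : Fin N → Fin R)
    -- every k-collision-free t differs from s in at least εN positions
    (hfar : ∀ t : Fin N → Fin R,
      (∀ v : Fin R, (Finset.univ.filter (fun i => t i = v)).card < k) →
      ε * N ≤ ((Finset.univ.filter (fun i => s i ≠ t i)).card : ℝ)) :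
    -- every k-star-free digraph on the same vertex set differs from G_s in at least εN edges
    (∀ E' : Finset ((Fin N ⊕ Fin R) × (Fin N ⊕ Fin R)),
      ¬ ContainsCopy (starEdges k) E' →
      ε * N ≤ ((symmDiff (gsEdges s) E').card : ℝ)) ∧
    -- in particular, G_s is (εN/(d(N+R)))-far from k-star-freeness w.r.t. out-degree bound d
    (∀ E' : Finset ((Fin N ⊕ Fin R) × (Fin N ⊕ Fin R)),
      ¬ ContainsCopy (starEdges k) E' →
      ε * N / (d * (N + R)) * d * (N + R) ≤ ((symmDiff (gsEdges s) E').card : ℝ)) := by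
  classical
  have key : ∀ E' : Finset ((Fin N ⊕ Fin R) × (Fin N ⊕ Fin R)),
      ¬ ContainsCopy (starEdges k) E' →
      ε * N ≤ ((symmDiff (gsEdges s) E').card : ℝ) := by
    intro E' hE'
    set B : Finset (Fin N) := Finset.univ.filter (fun i => (Sum.inl i, Sum.inr (s i)) ∉ E')
      with hBdef
    have hmemB : ∀ i : Fin N, i ∈ B ↔ (Sum.inl i, Sum.inr (s i)) ∉ E' := by
      intro i; simp [hBdef]
    -- Step 1 : B.card ≤ symmDiff card
    have h1 : B.card ≤ (symmDiff (gsEdges s) E').card := by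
      apply Finset.card_le_card_of_injOn (fun i => (Sum.inl i, Sum.inr (s i)))
      · intro i hi
        rw [Finset.mem_coe, Finset.mem_symmDiff]
        left
        exact ⟨by simp [gsEdges], (hmemB i).1 hi⟩
      · intro a _ b _ h
        simp only [Prod.mk.injEq, Sum.inl.injEq, Sum.inr.injEq] at h
        exact h.1
    -- Step 2 : star-freeness bounds the multiplicity of each value off B
    have hcount : ∀ v : Fin R,
        (Finset.univ.filter (fun i => i ∉ B ∧ s i = v)).card < k := by
      intro v
      by_contra hcon
      push_neg at hcon
      set F := Finset.univ.filter (fun i => i ∉ B ∧ s i = v) with hF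
      set g := F.orderEmbOfCardLe hcon with hg
      have hgmem : ∀ j : Fin k, g j ∈ F := fun j => F.orderEmbOfCardLe_mem hcon j
      apply hE'
      refine ⟨fun j => Fin.cases (Sum.inr v) (fun j' => Sum.inl (g j')) j, ?_, ?_⟩
      · intro a b hab
        induction a using Fin.cases with
        | zero =>
          induction b using Fin.cases with
          | zero => rfl
          | succ j => simp at hab
        | succ i =>
          induction b using Fin.cases with
          | zero => simp at hab
          | succ j =>
            simp only [Fin.cases_succ, Sum.inl.injEq] at hab
            exact congrArg Fin.succ (g.injective hab)
      · intro a b hab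
        simp only [starEdges, Finset.mem_image, Finset.mem_univ, true_and] at hab
        obtain ⟨j, hj⟩ := hab
        cases hj
        simp only [Fin.cases_succ, Fin.cases_zero]
        have hjF := hgmem j
        rw [hF, Finset.mem_filter] at hjF
        obtain ⟨-, hjB, hjv⟩ := hjF
        have hin : (Sum.inl (g j), Sum.inr (s (g j))) ∈ E' := by
          by_contra hcc
          exact hjB ((hmemB _).mpr hcc)
        rwa [hjv] at hin
    -- Step 3 : there is room for B in the unused values
    set C : Finset (Fin N) := Finset.univ.filter (fun i => i ∉ B) with hC
    set U : Finset (Fin R) := Finset.univ \ C.image s with hU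
    have hUcard : B.card ≤ U.card := by
      have h2 : (C.image s).card ≤ C.card := Finset.card_image_le
      have h3 : C = Bᶜ := by ext i; simp [hC]
      have h4 : C.card = N - B.card := by
        rw [h3, Finset.card_compl, Fintype.card_fin]
      have h5 : U.card = R - (C.image s).card := by
        rw [hU, Finset.card_sdiff, Finset.inter_univ, Finset.card_univ, Fintype.card_fin]
      have h6 : B.card ≤ N := by
        simpa using Finset.card_le_card (Finset.subset_univ B)
      omega
    obtain ⟨emb⟩ : Nonempty (↥B ↪ ↥U) :=
      Function.Embedding.nonempty_of_card_le (by simpa [Fintype.card_coe] using hUcard)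
    set t : Fin N → Fin R := fun i => if h : i ∈ B then (emb ⟨i, h⟩ : Fin R) else s i with ht
    have htB : ∀ i (h : i ∈ B), t i = (emb ⟨i, h⟩ : Fin R) := fun i h => dif_pos h
    have htC : ∀ i, i ∉ B → t i = s i := fun i h => dif_neg h
    have hembU : ∀ x : ↥B, ((emb x : ↥U) : Fin R) ∈ U := fun x => (emb x).2
    -- t is k-collision-free
    have hcf : ∀ v : Fin R, (Finset.univ.filter (fun i => t i = v)).card < k := by
      intro v
      by_cases hv : v ∈ U
      · have hle : (Finset.univ.filter (fun i => t i = v)).card ≤ 1 := by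
          rw [Finset.card_le_one]
          intro a ha b hb
          simp only [Finset.mem_filter, Finset.mem_univ, true_and] at ha hb
          have haB : a ∈ B := by
            by_contra h
            refine (Finset.mem_sdiff.mp hv).2 (Finset.mem_image.mpr ⟨a, ?_, ?_⟩)
            · simp [hC, h]
            · rw [← htC a h]; exact ha
          have hbB : b ∈ B := by
            by_contra h
            refine (Finset.mem_sdiff.mp hv).2 (Finset.mem_image.mpr ⟨b, ?_, ?_⟩)
            · simp [hC, h]
            · rw [← htC b h]; exact hb
          have : emb ⟨a, haB⟩ = emb ⟨b, hbB⟩ := by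
            apply Subtype.coe_injective
            show ((emb ⟨a, haB⟩ : ↥U) : Fin R) = ((emb ⟨b, hbB⟩ : ↥U) : Fin R)
            rw [← htB a haB, ← htB b hbB, ha, hb]
          exact Subtype.ext_iff.mp (emb.injective this)
        omega
      · have hsub : (Finset.univ.filter (fun i => t i = v)) ⊆
            Finset.univ.filter (fun i => i ∉ B ∧ s i = v) := by
          intro i hi
          simp only [Finset.mem_filter, Finset.mem_univ, true_and] at hi ⊢
          have hiB : i ∉ B := by
            intro h
            apply hv
            rw [← hi, htB i h]
            exact hembU ⟨i, h⟩
          exact ⟨hiB, by rw [← htC i hiB]; exact hi⟩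
        exact lt_of_le_of_lt (Finset.card_le_card hsub) (hcount v)
    -- differences between s and t lie in B
    have hdiff : (Finset.univ.filter (fun i => s i ≠ t i)) ⊆ B := by
      intro i hi
      simp only [Finset.mem_filter, Finset.mem_univ, true_and] at hi
      by_contra h
      exact hi (htC i h).symm
    calc ε * N ≤ ((Finset.univ.filter (fun i => s i ≠ t i)).card : ℝ) := hfar t hcf
      _ ≤ ((symmDiff (gsEdges s) E').card : ℝ) := by
          exact_mod_cast le_trans (Finset.card_le_card hdiff) h1
  refine ⟨key, fun E' hE' => ?_⟩
  have hd0 : (d : ℝ) ≠ 0 := by positivity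
  have hnr : (N : ℝ) + R ≠ 0 := by positivity
  have heq : ε * N / (d * (N + R)) * d * (N + R) = ε * N := by
    field_simp
  rw [heq]
  exact key E' hE'
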